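/- Let X, W, Y⁰, Y¹ be random variables on a common probability space, with W taking values in {0,1} and Y⁰, Y¹ integrable. Assume unconfoundedness: the pair (Y⁰, Y¹) is conditionally independent of W given the σ-algebra σ(X). Let e = E[W | σ(X)] be the treatment propensity and assume ε ≤ e ≤ 1 − ε almost surely for some ε > 0. Define the observed outcome Y = W·Y¹ + (1 − W)·Y⁰. Then, almost surely, E[ Y·( W/e − (1 − W)/(1 − e) ) | σ(X) ] = E[ Y¹ − Y⁰ | σ(X) ]. -/

import Mathlib

open MeasureTheory ProbabilityTheory

lemma comap_indicator_le' {Ω : Type*} [MeasurableSpace Ω] {W : Ω → ℝ}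
    (hW01 : ∀ ω, W ω = 0 ∨ W ω = 1) :
    MeasurableSpace.comap W inferInstance ≤ MeasurableSpace.generateFrom {W ⁻¹' {1}} := by
  rintro t ⟨s, hs, rfl⟩
  have hbase : MeasurableSet[MeasurableSpace.generateFrom {W ⁻¹' {1}}] (W ⁻¹' {1}) :=
    MeasurableSpace.measurableSet_generateFrom (Set.mem_singleton _)
  by_cases h1 : (1:ℝ) ∈ s <;> by_cases h0 : (0:ℝ) ∈ s
  · have h : W ⁻¹' s = Set.univ := by
      ext ω; simp only [Set.mem_preimage, Set.mem_univ, iff_true]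
      rcases hW01 ω with h | h <;> rw [h] <;> assumption
    rw [h]; exact @MeasurableSet.univ Ω (MeasurableSpace.generateFrom {W ⁻¹' {1}})
  · have h : W ⁻¹' s = W ⁻¹' {1} := by
      ext ω; rcases hW01 ω with h | h <;> simp [h, h1, h0]
    rw [h]; exact hbase
  · have h : W ⁻¹' s = (W ⁻¹' {1})ᶜ := by
      ext ω; rcases hW01 ω with h | h <;> simp [h, h1, h0]
    rw [h]; exact MeasurableSet.compl hbase
  · have h : W ⁻¹' s = (∅ : Set Ω) := by
      ext ω; rcases hW01 ω with h | h <;> simp [h, h1, h0]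
    rw [h]; exact @MeasurableSet.empty Ω (MeasurableSpace.generateFrom {W ⁻¹' {1}})

lemma condexp_mul_of_condIndepFun_indicator
    {Ω : Type*} {m : MeasurableSpace Ω} [mΩ : MeasurableSpace Ω] [StandardBorelSpace Ω]
    [Nonempty Ω] (μ : Measure Ω) [IsProbabilityMeasure μ] (hm : m ≤ mΩ)
    {f W : Ω → ℝ} (hf : Measurable f) (hW : Measurable W)
    (hW01 : ∀ ω, W ω = 0 ∨ W ω = 1)
    (hfi : Integrable f μ)
    (hindep : CondIndepFun m hm f W μ) :
    μ[fun ω => W ω * f ω | m] =ᵐ[μ] fun ω => (μ[W|m]) ω * (μ[f|m]) ω := by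
  set κ := condExpKernel μ m with hκ
  set A := W ⁻¹' {1} with hA
  have hAmeas : MeasurableSet A := hW (measurableSet_singleton 1)
  have h1 : ∀ q : ℚ, ∀ᵐ ω ∂μ,
      κ ω (f ⁻¹' Set.Iic (q:ℝ) ∩ A) = κ ω (f ⁻¹' Set.Iic (q:ℝ)) * κ ω A := by
    intro q
    refine ae_of_ae_trim hm ?_
    exact hindep _ _ ⟨Set.Iic (q:ℝ), measurableSet_Iic, rfl⟩ ⟨{1}, measurableSet_singleton 1, rfl⟩
  have h2 : ∀ᵐ ω ∂μ, ∀ q : ℚ,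
      κ ω (f ⁻¹' Set.Iic (q:ℝ) ∩ A) = κ ω (f ⁻¹' Set.Iic (q:ℝ)) * κ ω A := ae_all_iff.mpr h1
  have h3 : ∀ᵐ ω ∂μ, Integrable f (κ ω) := hfi.condExpKernel_ae
  have h4 : ∀ᵐ ω ∂μ, ∫ y, W y * f y ∂(κ ω) = (∫ y, W y ∂(κ ω)) * ∫ y, f y ∂(κ ω) := by
    filter_upwards [h2, h3] with ω hω hfω
    have hWint : Integrable W (κ ω) := by
      refine Integrable.mono' (integrable_const 1) hW.aestronglyMeasurable ?_
      exact Filter.Eventually.of_forall fun x => by rcases hW01 x with h|h <;> simp [h]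
    have hp1 : IsPiSystem ((Set.preimage f) '' (⋃ q : ℚ, {Set.Iic (q:ℝ)})) :=
      IsPiSystem.comap Real.isPiSystem_Iic_rat f
    have hgen1 : MeasurableSpace.comap f inferInstance
        = MeasurableSpace.generateFrom ((Set.preimage f) '' (⋃ q : ℚ, {Set.Iic (q:ℝ)})) := by
      conv_lhs => rw [show (inferInstance : MeasurableSpace ℝ) = borel ℝ from
        BorelSpace.measurable_eq, Real.borel_eq_generateFrom_Iic_rat]
      exact MeasurableSpace.comap_generateFrom
    have hsets : IndepSets ((Set.preimage f) '' (⋃ q : ℚ, {Set.Iic (q:ℝ)})) {A} (κ ω) := by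
      rintro t1 t2 ⟨s, hs, rfl⟩ ht2
      simp only [Set.mem_iUnion, Set.mem_singleton_iff] at hs
      obtain ⟨q, rfl⟩ := hs
      rw [Set.mem_singleton_iff] at ht2; subst ht2
      exact Filter.Eventually.of_forall fun _ => by
        simpa [Kernel.const_apply] using hω q
    have hIndep : Indep (MeasurableSpace.comap f inferInstance)
        (MeasurableSpace.generateFrom {A}) (κ ω) := by
      refine IndepSets.indep hf.comap_le ?_ hp1 (IsPiSystem.singleton A) hgen1 rfl hsets
      exact MeasurableSpace.generateFrom_le (by rintro s rfl; exact hAmeas)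
    have hip : IndepFun f W (κ ω) :=
      indep_of_indep_of_le_right hIndep (comap_indicator_le' hW01)
    have := hip.symm.integral_mul_eq_mul_integral hWint.aestronglyMeasurable hfω.aestronglyMeasurable
    simpa using this
  have hWfi : Integrable (fun ω => W ω * f ω) μ := by
    refine Integrable.mono' hfi.abs (hW.mul hf).aestronglyMeasurable ?_
    exact Filter.Eventually.of_forall fun x => by
      rcases hW01 x with h|h <;> simp [h, abs_nonneg]
  have hWi : Integrable W μ := by
    refine Integrable.mono' (integrable_const 1) hW.aestronglyMeasurable ?_
    exact Filter.Eventually.of_forall fun x => by rcases hW01 x with h|h <;> simp [h]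
  have e1 := condExp_ae_eq_integral_condExpKernel hm hWfi
  have e2 := condExp_ae_eq_integral_condExpKernel hm hWi
  have e3 := condExp_ae_eq_integral_condExpKernel hm hfi
  filter_upwards [e1, e2, e3, h4] with ω k1 k2 k3 k4
  rw [k1, k2, k3]
  exact k4

theorem propensity_aux
    {Ω : Type*} {m : MeasurableSpace Ω} [mΩ : MeasurableSpace Ω] [StandardBorelSpace Ω]
    [Nonempty Ω] (μ : Measure Ω) [IsProbabilityMeasure μ]
    (W Y0 Y1 : Ω → ℝ) (hW : Measurable W)
    (hY0 : Measurable Y0) (hY1 : Measurable Y1)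
    (hW01 : ∀ ω, W ω = 0 ∨ W ω = 1)
    (hY0int : Integrable Y0 μ) (hY1int : Integrable Y1 μ)
    (hmX : m ≤ mΩ)
    (hunconf : CondIndepFun m hmX (fun ω => (Y0 ω, Y1 ω)) W μ)
    (e : Ω → ℝ) (he : e = μ[W | m])
    (ε : ℝ) (hε : 0 < ε)
    (hoverlap : ∀ᵐ ω ∂μ, ε ≤ e ω ∧ e ω ≤ 1 - ε)
    (Y : Ω → ℝ) (hY : Y = fun ω => W ω * Y1 ω + (1 - W ω) * Y0 ω) :
    μ[(fun ω => Y ω * (W ω / e ω - (1 - W ω) / (1 - e ω))) | m]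
      =ᵐ[μ] μ[(fun ω => Y1 ω - Y0 ω) | m] := by
  -- measurability of e
  have heSM : StronglyMeasurable[m] e := he ▸ stronglyMeasurable_condExp
  have heMeas : Measurable e := ((heSM.mono hmX).measurable)
  -- the complementary treatment indicator
  set W' : Ω → ℝ := fun ω => 1 - W ω with hW'
  have hW'meas : Measurable W' := measurable_const.sub hW
  have hW'01 : ∀ ω, W' ω = 0 ∨ W' ω = 1 := fun ω => by
    rcases hW01 ω with h | h <;> simp [hW', h]
  -- conditional independences from unconfoundedness
  have hind1 : CondIndepFun m hmX Y1 W μ :=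
    hunconf.comp measurable_snd measurable_id
  have hind0 : CondIndepFun m hmX Y0 W' μ :=
    hunconf.comp measurable_fst (measurable_const.sub measurable_id)
  -- product identities
  have key1 := condexp_mul_of_condIndepFun_indicator μ hmX hY1 hW hW01 hY1int hind1
  have key0 := condexp_mul_of_condIndepFun_indicator μ hmX hY0 hW'meas hW'01 hY0int hind0
  -- integrability facts
  have hWi : Integrable W μ := by
    refine Integrable.mono' (integrable_const 1) hW.aestronglyMeasurable ?_
    exact Filter.Eventually.of_forall fun x => by rcases hW01 x with h|h <;> simp [h]
  have hWY1int : Integrable (fun ω => W ω * Y1 ω) μ := by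
    refine Integrable.mono' hY1int.abs (hW.mul hY1).aestronglyMeasurable ?_
    exact Filter.Eventually.of_forall fun x => by
      rcases hW01 x with h|h <;> simp [h, abs_nonneg]
  have hWY0int : Integrable (fun ω => W' ω * Y0 ω) μ := by
    refine Integrable.mono' hY0int.abs (hW'meas.mul hY0).aestronglyMeasurable ?_
    exact Filter.Eventually.of_forall fun x => by
      rcases hW'01 x with h|h <;> simp [h, abs_nonneg]
  -- the two weighted pieces
  set G1 : Ω → ℝ := fun ω => (e ω)⁻¹ * (W ω * Y1 ω) with hG1
  set G0 : Ω → ℝ := fun ω => (1 - e ω)⁻¹ * (W' ω * Y0 ω) with hG0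
  have hG1int : Integrable G1 μ := by
    refine Integrable.mono' (hY1int.abs.const_mul ε⁻¹)
      ((heMeas.inv.mul (hW.mul hY1)).aestronglyMeasurable) ?_
    filter_upwards [hoverlap] with ω ⟨h1, h2⟩
    have hepos : 0 < e ω := lt_of_lt_of_le hε h1
    have h3 : (e ω)⁻¹ ≤ ε⁻¹ := by
      exact inv_anti₀ hε h1
    have h4 : |W ω * Y1 ω| ≤ |Y1 ω| := by
      rcases hW01 ω with h|h <;> simp [h, abs_nonneg]
    calc ‖G1 ω‖ = (e ω)⁻¹ * |W ω * Y1 ω| := by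
          rw [hG1]; rw [Real.norm_eq_abs, abs_mul, abs_of_nonneg (inv_nonneg.2 hepos.le)]
      _ ≤ ε⁻¹ * |Y1 ω| := by
          exact mul_le_mul h3 h4 (abs_nonneg _) (inv_nonneg.2 hε.le)
  have hG0int : Integrable G0 μ := by
    refine Integrable.mono' (hY0int.abs.const_mul ε⁻¹)
      (((measurable_const.sub heMeas).inv.mul (hW'meas.mul hY0)).aestronglyMeasurable) ?_
    filter_upwards [hoverlap] with ω ⟨h1, h2⟩
    have hepos : 0 < 1 - e ω := by linarith
    have h3 : (1 - e ω)⁻¹ ≤ ε⁻¹ := by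
      refine inv_anti₀ hε ?_; linarith
    have h4 : |W' ω * Y0 ω| ≤ |Y0 ω| := by
      rcases hW'01 ω with h|h <;> simp [h, abs_nonneg]
    calc ‖G0 ω‖ = (1 - e ω)⁻¹ * |W' ω * Y0 ω| := by
          rw [hG0]; rw [Real.norm_eq_abs, abs_mul, abs_of_nonneg (inv_nonneg.2 hepos.le)]
      _ ≤ ε⁻¹ * |Y0 ω| := by
          exact mul_le_mul h3 h4 (abs_nonneg _) (inv_nonneg.2 hε.le)
  -- rewrite the integrand
  have hFG : (fun ω => Y ω * (W ω / e ω - (1 - W ω) / (1 - e ω))) = G1 - G0 := by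
    funext ω
    simp only [Pi.sub_apply, hG1, hG0, hW', hY, div_eq_mul_inv]
    rcases hW01 ω with h | h <;> rw [h] <;> ring
  rw [hFG]
  -- conditional expectation computations
  have hc1 : μ[G1 - G0|m] =ᵐ[μ] μ[G1|m] - μ[G0|m] := condExp_sub hG1int hG0int m
  have hc2 : μ[G1|m] =ᵐ[μ] (fun ω => (e ω)⁻¹) * μ[fun ω => W ω * Y1 ω|m] :=
    condExp_mul_of_stronglyMeasurable_left (heSM.measurable.inv.stronglyMeasurable) hG1int hWY1int
  have hc3 : μ[G0|m] =ᵐ[μ] (fun ω => (1 - e ω)⁻¹) * μ[fun ω => W' ω * Y0 ω|m] :=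
    condExp_mul_of_stronglyMeasurable_left
      ((measurable_const.sub heSM.measurable).inv.stronglyMeasurable) hG0int hWY0int
  have hce : μ[W'|m] =ᵐ[μ] fun ω => 1 - e ω := by
    have h := condExp_sub (μ := μ) (m := m) (integrable_const (1:ℝ)) hWi
    have h2 : μ[fun _ : Ω => (1:ℝ)|m] = fun _ => (1:ℝ) := condExp_const hmX 1
    have h3 : μ[W'|m] = μ[(fun _ : Ω => (1:ℝ)) - W|m] := by
      congr 1
    filter_upwards [h] with ω hω
    rw [h3]
    calc (μ[(fun _ : Ω => (1:ℝ)) - W|m]) ω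
        = (μ[fun _ : Ω => (1:ℝ)|m]) ω - (μ[W|m]) ω := hω
      _ = 1 - e ω := by rw [h2, he]
  have hRHS : μ[fun ω => Y1 ω - Y0 ω|m] =ᵐ[μ] μ[Y1|m] - μ[Y0|m] :=
    condExp_sub hY1int hY0int m
  filter_upwards [hc1, hc2, hc3, key1, key0, hce, hRHS, hoverlap]
    with ω h1 h2 h3 k1 k0 hcew hr ⟨ho1, ho2⟩
  have hne1 : e ω ≠ 0 := (lt_of_lt_of_le hε ho1).ne'
  have hne2 : 1 - e ω ≠ 0 := by
    have h : (0:ℝ) < 1 - e ω := by linarith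
    exact h.ne'
  rw [h1, Pi.sub_apply, h2, h3, Pi.mul_apply, Pi.mul_apply, k1, k0, hcew, hr, Pi.sub_apply,
    ← he, ← mul_assoc, inv_mul_cancel₀ hne1, one_mul, ← mul_assoc, inv_mul_cancel₀ hne2, one_mul]

/-- Under unconfoundedness and overlap, the propensity-weighted
observed outcome identifies the conditional average treatment effect:
`E[ Y·( W/e − (1 − W)/(1 − e) ) | σ(X) ] = E[ Y¹ − Y⁰ | σ(X) ]` almost surely. -/
theorem propensity_weighting_identifies_cate
    {Ω : Type*} [MeasurableSpace Ω] [StandardBorelSpace Ω] [Nonempty Ω]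
    {E : Type*} [MeasurableSpace E]
    (μ : Measure Ω) [IsProbabilityMeasure μ]
    (X : Ω → E) (W Y0 Y1 : Ω → ℝ)
    (hX : Measurable X) (hW : Measurable W)
    (hY0 : Measurable Y0) (hY1 : Measurable Y1)
    (hW01 : ∀ ω, W ω = 0 ∨ W ω = 1)
    (hY0int : Integrable Y0 μ) (hY1int : Integrable Y1 μ)
    (hmX : MeasurableSpace.comap X inferInstance ≤ (inferInstance : MeasurableSpace Ω))
    (hunconf : CondIndepFun (MeasurableSpace.comap X inferInstance) hmX
      (fun ω => (Y0 ω, Y1 ω)) W μ)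
    (e : Ω → ℝ) (he : e = μ[W | MeasurableSpace.comap X inferInstance])
    (ε : ℝ) (hε : 0 < ε)
    (hoverlap : ∀ᵐ ω ∂μ, ε ≤ e ω ∧ e ω ≤ 1 - ε)
    (Y : Ω → ℝ) (hY : Y = fun ω => W ω * Y1 ω + (1 - W ω) * Y0 ω) :
    μ[(fun ω => Y ω * (W ω / e ω - (1 - W ω) / (1 - e ω))) |
        MeasurableSpace.comap X inferInstance]
      =ᵐ[μ] μ[(fun ω => Y1 ω - Y0 ω) | MeasurableSpace.comap X inferInstance] :=
  propensity_aux μ W Y0 Y1 hW hY0 hY1 hW01 hY0int hY1int hmX hunconf e he ε hε hoverlap Y hY
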